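/- Let m ≥ 1 be an integer. Define Φ_{S4}(m,a,b;t) = 4π² cosh(t/4) (4 sinh²(t/(2m)) + 4a)^m (4 sinh²(t/(2m)) + 4b)^m e^{−2π cosh t}. Let δ = (4π²)^{−1} e^{2π} Φ(0) and γ = (16 Φ''(0) + (32π − 1) Φ(0)) / (128 Φ(0)), where Φ(0) = Σ_{n=1}^{∞} (2π² n⁴ − 3π n²) e^{−π n²} and Φ''(0) is the second derivative at 0 of the kernel Φ(t) = Σ_{n=1}^{∞} (2π² n⁴ e^{9t/4} − 3π n² e^{5t/4}) e^{−π n² e^t}. If a, b > 0 satisfy a + b = m γ δ^{1/m} and ab = (1/16) δ^{1/m}, then Φ_{S4}(m,a,b;0) = Φ(0) and (d²/dt²) Φ_{S4}(m,a,b;t) |_{t=0} = Φ''(0). -/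

import Mathlib

open Real

/-- The Riemann xi kernel
`Φ(t) = ∑_{n=1}^{∞} (2π² n⁴ e^{9t/4} − 3π n² e^{5t/4}) e^{−π n² e^t}`. -/
noncomputable def Phi (t : ℝ) : ℝ :=
  ∑' n : ℕ,
    (2 * π ^ 2 * (n + 1 : ℝ) ^ 4 * exp (9 * t / 4)
      - 3 * π * (n + 1 : ℝ) ^ 2 * exp (5 * t / 4)) * exp (-π * (n + 1 : ℝ) ^ 2 * exp t)

/-- The approximating kernel
`Φ_{S4}(m,a,b;t) = 4π² cosh(t/4)(4 sinh²(t/(2m)) + 4a)^m (4 sinh²(t/(2m)) + 4b)^m e^{−2π cosh t}`. -/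
noncomputable def PhiS4 (m : ℕ) (a b t : ℝ) : ℝ :=
  4 * π ^ 2 * cosh (t / 4) * (4 * sinh (t / (2 * m)) ^ 2 + 4 * a) ^ m *
    (4 * sinh (t / (2 * m)) ^ 2 + 4 * b) ^ m * exp (-2 * π * cosh t)

/-- `δ = (4π²)⁻¹ e^{2π} Φ(0)`. -/
noncomputable def deltaConst : ℝ := (4 * π ^ 2)⁻¹ * exp (2 * π) * Phi 0

/-- `γ = (16 Φ''(0) + (32π − 1) Φ(0)) / (128 Φ(0))`. -/
noncomputable def gammaConst : ℝ :=
  (16 * iteratedDeriv 2 Phi 0 + (32 * π - 1) * Phi 0) / (128 * Phi 0)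

lemma Phi0_pos : 0 < Phi 0 := by
  have hterm : ∀ n : ℕ, (0:ℝ) <
      (2*π^2*((n:ℝ)+1)^4 - 3*π*((n:ℝ)+1)^2) * exp (-π*((n:ℝ)+1)^2) := by
    intro n
    have hx : (1:ℝ) ≤ (n:ℝ)+1 := by
      have := Nat.cast_nonneg (α := ℝ) n; linarith
    have hπ := Real.pi_gt_three
    have hx2 : (1:ℝ) ≤ ((n:ℝ)+1)^2 := by nlinarith
    have hxx : ((n:ℝ)+1)^2 ≤ ((n:ℝ)+1)^4 := by
      nlinarith [sq_nonneg (((n:ℝ)+1)^2 - 1)]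
    have h3 : (0:ℝ) < 2*π^2 - 3*π := by nlinarith
    have h4 := mul_le_mul_of_nonneg_left hx2 h3.le
    have h5 := mul_le_mul_of_nonneg_left hxx (by positivity : (0:ℝ) ≤ 2*π^2)
    have h1 : 0 < 2*π^2*((n:ℝ)+1)^4 - 3*π*((n:ℝ)+1)^2 := by nlinarith
    positivity
  have hsum : Summable (fun n : ℕ =>
      (2*π^2*((n:ℝ)+1)^4 - 3*π*((n:ℝ)+1)^2) * exp (-π*((n:ℝ)+1)^2)) := by
    have hr : ‖exp (-π)‖ < 1 := by
      rw [Real.norm_eq_abs, abs_of_pos (exp_pos _)]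
      exact exp_lt_one_iff.mpr (neg_lt_zero.mpr Real.pi_pos)
    have hgeo : Summable (fun n : ℕ => (n:ℝ)^4 * exp (-π) ^ n) :=
      summable_pow_mul_geometric_of_norm_lt_one 4 hr
    have hgeo1 : Summable (fun n : ℕ => (((n+1:ℕ)):ℝ)^4 * exp (-π) ^ (n+1)) :=
      hgeo.comp_injective Nat.succ_injective
    have hgeo2 : Summable (fun n : ℕ => 2*π^2 * ((((n:ℝ)+1))^4 * exp (-π) ^ (n+1))) := by
      have := hgeo1.mul_left (2*π^2)
      convert this using 2 with n
      · rfl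
      push_cast
      ring
    refine Summable.of_nonneg_of_le (fun n => (hterm n).le) (fun n => ?_) hgeo2
    have hx : (1:ℝ) ≤ (n:ℝ)+1 := by
      have := Nat.cast_nonneg (α := ℝ) n; linarith
    have h1 : 2*π^2*((n:ℝ)+1)^4 - 3*π*((n:ℝ)+1)^2 ≤ 2*π^2*((n:ℝ)+1)^4 := by
      nlinarith [Real.pi_pos]
    have h2 : exp (-π*((n:ℝ)+1)^2) ≤ exp (-π) ^ (n+1) := by
      rw [← Real.exp_nat_mul]
      apply Real.exp_le_exp.mpr
      push_cast
      nlinarith [Real.pi_pos]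
    calc (2*π^2*((n:ℝ)+1)^4 - 3*π*((n:ℝ)+1)^2) * exp (-π*((n:ℝ)+1)^2)
        ≤ 2*π^2*((n:ℝ)+1)^4 * exp (-π*((n:ℝ)+1)^2) := by
          apply mul_le_mul_of_nonneg_right h1 (exp_pos _).le
      _ ≤ 2*π^2*((n:ℝ)+1)^4 * exp (-π) ^ (n+1) := by
          apply mul_le_mul_of_nonneg_left h2 (by positivity)
      _ = 2*π^2 * (((n:ℝ)+1)^4 * exp (-π) ^ (n+1)) := by ring
  have hPhi : Phi 0 = ∑' n : ℕ,
      (2*π^2*((n:ℝ)+1)^4 - 3*π*((n:ℝ)+1)^2) * exp (-π*((n:ℝ)+1)^2) := by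
    unfold Phi
    norm_num
  rw [hPhi]
  exact Summable.tsum_pos hsum (fun n => (hterm n).le) 0 (hterm 0)

noncomputable def D1 (m : ℕ) (a b t : ℝ) : ℝ :=
  4 * π ^ 2 * exp (-2 * π * cosh t) *
    ( sinh (t / 4) * (1/4) * (4 * sinh (t/(2*m))^2 + 4*a)^m * (4 * sinh (t/(2*m))^2 + 4*b)^m
    + cosh (t / 4) *
        ((m:ℝ) * (4 * sinh (t/(2*m))^2 + 4*a)^(m-1) * (8 * sinh (t/(2*m)) * cosh (t/(2*m)) * (1/(2*(m:ℝ)))) * (4 * sinh (t/(2*m))^2 + 4*b)^m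
        + (m:ℝ) * (4 * sinh (t/(2*m))^2 + 4*b)^(m-1) * (8 * sinh (t/(2*m)) * cosh (t/(2*m)) * (1/(2*(m:ℝ)))) * (4 * sinh (t/(2*m))^2 + 4*a)^m)
    - cosh (t / 4) * (4 * sinh (t/(2*m))^2 + 4*a)^m * (4 * sinh (t/(2*m))^2 + 4*b)^m * (2 * π * sinh t))

lemma hasDerivAt_PhiS4 (m : ℕ) (a b t : ℝ) :
    HasDerivAt (fun t => PhiS4 m a b t) (D1 m a b t) t := by
  have hu : HasDerivAt (fun t : ℝ => sinh (t / (2*(m:ℝ)))) (cosh (t/(2*(m:ℝ))) * (1/(2*(m:ℝ)))) t := by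
    simpa using ((hasDerivAt_id t).div_const (2*(m:ℝ))).sinh
  have hG : HasDerivAt (fun t : ℝ => 4 * sinh (t/(2*(m:ℝ)))^2 + 4*a)
      (4 * ((2:ℝ) * sinh (t/(2*(m:ℝ)))^1 * (cosh (t/(2*(m:ℝ))) * (1/(2*(m:ℝ)))))) t :=
    ((hu.pow 2).const_mul 4).add_const _
  have hH : HasDerivAt (fun t : ℝ => 4 * sinh (t/(2*(m:ℝ)))^2 + 4*b)
      (4 * ((2:ℝ) * sinh (t/(2*(m:ℝ)))^1 * (cosh (t/(2*(m:ℝ))) * (1/(2*(m:ℝ)))))) t :=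
    ((hu.pow 2).const_mul 4).add_const _
  have hGm := hG.pow m
  have hHm := hH.pow m
  have hB : HasDerivAt (fun t : ℝ => cosh (t/4)) (sinh (t/4) * (1/4)) t := by
    simpa using ((hasDerivAt_id t).div_const 4).cosh
  have hA := hB.const_mul (4*π^2)
  have hE := ((Real.hasDerivAt_cosh t).const_mul (-2*π)).exp
  have h := ((hA.mul hGm).mul hHm).mul hE
  have h2 : HasDerivAt (fun t => PhiS4 m a b t) _ t := h
  convert h2 using 1
  unfold D1
  simp only [Pi.mul_apply, Pi.pow_apply]
  ring


/-- **Theorem 4(B) of the paper.** For `m ≥ 1` and `a, b > 0` with `a + b = mγδ^{1/m}` and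
`ab = (1/16)δ^{1/m}`, the kernel `Φ_{S4}(m,a,b;·)` matches both the value and the second
derivative of `Φ` at `t = 0`. -/
theorem PhiS4_matches_Phi_at_zero (m : ℕ) (hm : 1 ≤ m) (a b : ℝ)
    (ha : 0 < a) (hb : 0 < b)
    (hsum : a + b = m * gammaConst * deltaConst ^ ((1 : ℝ) / m))
    (hprod : a * b = (1 / 16) * deltaConst ^ ((1 : ℝ) / m)) :
    PhiS4 m a b 0 = Phi 0 ∧
      iteratedDeriv 2 (fun t => PhiS4 m a b t) 0 = iteratedDeriv 2 Phi 0 := by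
  have hm' : (m:ℝ) ≠ 0 := Nat.cast_ne_zero.mpr (by omega)
  have hΦ0 := Phi0_pos
  have hδ : 0 < deltaConst := by
    unfold deltaConst
    have hπ := Real.pi_pos
    positivity
  have hK : deltaConst ^ ((1:ℝ)/m) = 16*(a*b) := by rw [hprod]; ring
  have hpow : (16*(a*b))^m = deltaConst := by
    rw [← hK, ← Real.rpow_natCast (deltaConst ^ ((1:ℝ)/m)) m, ← Real.rpow_mul hδ.le,
      one_div, inv_mul_cancel₀ hm', Real.rpow_one]
  have h16 : (4*a)^m * (4*b)^m = deltaConst := by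
    rw [← mul_pow, show (4*a)*(4*b) = 16*(a*b) by ring, hpow]
  have hexp : exp (2*π) * exp (-(2*π)) = 1 := by rw [← Real.exp_add]; norm_num
  have h4π : (4:ℝ)*π^2 ≠ 0 := by
    have := Real.pi_ne_zero; positivity
  have hδΦ : 4*π^2 * deltaConst * exp (-(2*π)) = Phi 0 := by
    unfold deltaConst
    calc 4*π^2 * ((4*π^2)⁻¹ * exp (2*π) * Phi 0) * exp (-(2*π))
        = (4*π^2 * (4*π^2)⁻¹) * (exp (2*π) * exp (-(2*π))) * Phi 0 := by ring
      _ = Phi 0 := by rw [mul_inv_cancel₀ h4π, hexp]; ring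
  have hab : a + b = (m:ℝ)*gammaConst*(16*(a*b)) := by rw [hsum, hK]
  have hγ : 1/(2*a*(m:ℝ)) + 1/(2*b*(m:ℝ)) = 8*gammaConst := by
    field_simp
    linear_combination hab
  have e1 : (4*a)^m = (4*a)^(m-1) * (4*a) := by
    conv_lhs => rw [show m = (m-1)+1 by omega]
    rw [pow_succ]
  have e2 : (4*b)^m = (4*b)^(m-1) * (4*b) := by
    conv_lhs => rw [show m = (m-1)+1 by omega]
    rw [pow_succ]
  have key : 4*π^2 * exp (-(2*π)) * ((4*a)^m * (4*b)^m) *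
      (1/16 + 1/(2*a*(m:ℝ)) + 1/(2*b*(m:ℝ)) - 2*π) = iteratedDeriv 2 Phi 0 := by
    have hbr : 1/16 + 1/(2*a*(m:ℝ)) + 1/(2*b*(m:ℝ)) - 2*π
        = 1/16 + 8*gammaConst - 2*π := by rw [← hγ]; ring
    rw [hbr, h16]
    have : 4*π^2 * exp (-(2*π)) * deltaConst = Phi 0 := by linarith [hδΦ]
    rw [show 4*π^2 * exp (-(2*π)) * deltaConst * (1/16 + 8*gammaConst - 2*π)
        = (4*π^2 * deltaConst * exp (-(2*π))) * (1/16 + 8*gammaConst - 2*π) by ring, hδΦ]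
    unfold gammaConst
    field_simp
    ring
  constructor
  · have h1 : PhiS4 m a b 0 = 4*π^2 * ((4*a)^m * (4*b)^m) * exp (-(2*π)) := by
      unfold PhiS4
      norm_num
      ring
    rw [h1, h16]
    linarith [hδΦ]
  · rw [iteratedDeriv_succ, iteratedDeriv_one]
    have hd : deriv (fun t => PhiS4 m a b t) = fun t => D1 m a b t :=
      funext fun t => (hasDerivAt_PhiS4 m a b t).deriv
    rw [hd]
    -- second derivative of D1 at 0
    have hu : HasDerivAt (fun t : ℝ => sinh (t / (2*(m:ℝ)))) (cosh ((0:ℝ)/(2*(m:ℝ))) * (1/(2*(m:ℝ)))) 0 := by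
      simpa using ((hasDerivAt_id (0:ℝ)).div_const (2*(m:ℝ))).sinh
    have hv : HasDerivAt (fun t : ℝ => cosh (t / (2*(m:ℝ)))) (sinh ((0:ℝ)/(2*(m:ℝ))) * (1/(2*(m:ℝ)))) 0 := by
      simpa using ((hasDerivAt_id (0:ℝ)).div_const (2*(m:ℝ))).cosh
    have hG : HasDerivAt (fun t : ℝ => 4 * sinh (t/(2*(m:ℝ)))^2 + 4*a)
        (4 * ((2:ℝ) * sinh ((0:ℝ)/(2*(m:ℝ)))^1 * (cosh ((0:ℝ)/(2*(m:ℝ))) * (1/(2*(m:ℝ)))))) 0 :=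
      ((hu.pow 2).const_mul 4).add_const _
    have hH : HasDerivAt (fun t : ℝ => 4 * sinh (t/(2*(m:ℝ)))^2 + 4*b)
        (4 * ((2:ℝ) * sinh ((0:ℝ)/(2*(m:ℝ)))^1 * (cosh ((0:ℝ)/(2*(m:ℝ))) * (1/(2*(m:ℝ)))))) 0 :=
      ((hu.pow 2).const_mul 4).add_const _
    have hGm := hG.pow m
    have hHm := hH.pow m
    have hGm1 := hG.pow (m-1)
    have hHm1 := hH.pow (m-1)
    have hB : HasDerivAt (fun t : ℝ => cosh (t/4)) (sinh ((0:ℝ)/4) * (1/4)) 0 := by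
      simpa using ((hasDerivAt_id (0:ℝ)).div_const 4).cosh
    have hs4 : HasDerivAt (fun t : ℝ => sinh (t/4)) (cosh ((0:ℝ)/4) * (1/4)) 0 := by
      simpa using ((hasDerivAt_id (0:ℝ)).div_const 4).sinh
    have hE := ((Real.hasDerivAt_cosh (0:ℝ)).const_mul (-2*π)).exp
    have hC := hE.const_mul (4*π^2)
    have hW := ((hu.const_mul 8).mul hv).mul_const (1/(2*(m:ℝ)))
    have hT1 := ((hs4.mul_const (1/4)).mul hGm).mul hHm
    have hT2a := ((hGm1.const_mul (m:ℝ)).mul hW).mul hHm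
    have hT2b := ((hHm1.const_mul (m:ℝ)).mul hW).mul hGm
    have hT2 := hB.mul (hT2a.add hT2b)
    have hsinh2π := (Real.hasDerivAt_sinh (0:ℝ)).const_mul (2*π)
    have hT4 := ((hB.mul hGm).mul hHm).mul hsinh2π
    have hS := (hT1.add hT2).sub hT4
    have hD := hC.mul hS
    have hD' : HasDerivAt (fun t => D1 m a b t) _ 0 := hD
    rw [hD'.deriv, ← key]
    norm_num
    rw [e1, e2]
    field_simp
    ring
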